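/- (Lemma 1, decoupling of independent detectors.) For every r ∈ ℕ, every list of detector values D₁, …, D_r ∈ G, and every ρ ∈ M with Π₀ * ρ * Π₀ = ρ, one has ∑_{s¹,s³,…,s^{2r-1} ∈ G} (I_{D_r + s^{2r-1}} ∘ I_{s^{2r-1}} ∘ ⋯ ∘ I_{D₁ + s¹} ∘ I_{s¹})(ρ) = (E^{D_r} ∘ ⋯ ∘ E^{D₂} ∘ E^{D₁})(ρ), i.e. the sum over all odd-round syndrome outcomes of the composition of 2r noisy syndrome-extraction instruments, with consecutive pairs constrained to have parities D₁,…,D_r, equals the composition of the detector error channels E^{D_r}∘⋯∘E^{D₁}. -/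
import Mathlib


open Matrix

/-- Lemma 1 (decoupling of independent detectors): for a codespace-supported
state `ρ`, summing the composition of `2r` noisy syndrome-extraction
instruments over all odd-round syndrome outcomes, with consecutive pairs
constrained to have parities `D₁, …, D_r`, yields the composition of the
detector error channels `E^{D_r} ∘ ⋯ ∘ E^{D₁}`. -/
theorem detector_decoupling (d k : ℕ)
    (Pr : (Fin k → ZMod 2) → Matrix (Fin d) (Fin d) ℂ)
    (hHerm : ∀ a, (Pr a).IsHermitian)
    (hOrth : ∀ a b, a ≠ b → Pr a * Pr b = 0)
    (hIdem : ∀ a, Pr a * Pr a = Pr a)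
    (hSum : ∑ a, Pr a = 1)
    (P : (Fin k → ZMod 2) → (Fin k → ZMod 2) →
      Module.End ℂ (Matrix (Fin d) (Fin d) ℂ))
    (Ptot : (Fin k → ZMod 2) → Module.End ℂ (Matrix (Fin d) (Fin d) ℂ))
    (hPtot : ∀ m, Ptot m = ∑ e, P m e)
    (hProp : ∀ m a b σ,
      Pr b * (Ptot m (Pr a * σ * Pr a)) * Pr b = P m (a + b) (Pr a * σ * Pr a))
    (hSupp : ∀ m e a σ,
      P m e (Pr a * σ * Pr a)
        = Pr (a + e) * (P m e (Pr a * σ * Pr a)) * Pr (a + e))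
    (I : (Fin k → ZMod 2) → Module.End ℂ (Matrix (Fin d) (Fin d) ℂ))
    (hI : ∀ s σ, I s σ = ∑ m, Ptot m (Pr (m + s) * σ * Pr (m + s)))
    (E : (Fin k → ZMod 2) → Module.End ℂ (Matrix (Fin d) (Fin d) ℂ))
    (hE : ∀ D σ, E D σ = ∑ m₁, ∑ m₂, Ptot m₂ (P m₁ (D + m₁ + m₂) σ))
    (r : ℕ) (D : Fin r → (Fin k → ZMod 2))
    (ρ : Matrix (Fin d) (Fin d) ℂ) (hρ : Pr 0 * ρ * Pr 0 = ρ) :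
    ∑ s : Fin r → (Fin k → ZMod 2),
        ((List.ofFn fun i => I (D i + s i) * I (s i)).reverse).prod ρ
      = ((List.ofFn fun i => E (D i)).reverse).prod ρ := by
  classical
  -- characteristic-two fact
  have hG : ∀ (x y z w : Fin k → ZMod 2), x + y + (z + (w + y)) = w + x + z := by
    intro x y z w
    funext i
    have h2 : ∀ a b c e : ZMod 2, a + b + (c + (e + b)) = e + a + c := by decide
    simpa using h2 (x i) (y i) (z i) (w i)
  -- conjugation by projectors
  have hconj : ∀ (a b : Fin k → ZMod 2) (σ : Matrix (Fin d) (Fin d) ℂ),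
      Pr b * (Pr a * σ * Pr a) * Pr b = if b = a then Pr a * σ * Pr a else 0 := by
    intro a b σ
    by_cases h : b = a
    · subst h
      simp only [if_pos rfl]
      calc Pr b * (Pr b * σ * Pr b) * Pr b
          = ((Pr b * Pr b) * σ) * (Pr b * Pr b) := by noncomm_ring
        _ = Pr b * σ * Pr b := by rw [hIdem]
    · simp only [if_neg h]
      calc Pr b * (Pr a * σ * Pr a) * Pr b
          = ((Pr b * Pr a) * σ) * (Pr a * Pr b) := by noncomm_ring
        _ = 0 := by rw [hOrth b a h, zero_mul, zero_mul]
  -- block diagonality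
  have hBD_sector : ∀ (c : Fin k → ZMod 2) (X : Matrix (Fin d) (Fin d) ℂ),
      Pr c * X * Pr c = X → ∑ a, Pr a * X * Pr a = X := by
    intro c X hX
    calc ∑ a, Pr a * X * Pr a = ∑ a, Pr a * (Pr c * X * Pr c) * Pr a := by rw [hX]
      _ = ∑ a, if a = c then Pr c * X * Pr c else 0 :=
          Finset.sum_congr rfl fun a _ => hconj c a X
      _ = Pr c * X * Pr c := by simp
      _ = X := hX
  have hBD_sum : ∀ {ι : Type} (t : Finset ι) (f : ι → Matrix (Fin d) (Fin d) ℂ),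
      (∀ i ∈ t, ∑ a, Pr a * f i * Pr a = f i) →
      ∑ a, Pr a * (∑ i ∈ t, f i) * Pr a = ∑ i ∈ t, f i := by
    intro ι t f hf
    calc ∑ a, Pr a * (∑ i ∈ t, f i) * Pr a
        = ∑ a, ∑ i ∈ t, Pr a * f i * Pr a := by
          refine Finset.sum_congr rfl fun a _ => ?_
          rw [Finset.mul_sum, Finset.sum_mul]
      _ = ∑ i ∈ t, ∑ a, Pr a * f i * Pr a := Finset.sum_comm
      _ = ∑ i ∈ t, f i := Finset.sum_congr rfl hf
  have hBD_I : ∀ (s : Fin k → ZMod 2) (σ : Matrix (Fin d) (Fin d) ℂ),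
      ∑ a, Pr a * (I s σ) * Pr a = I s σ := by
    intro s σ
    rw [hI]
    refine hBD_sum _ _ fun m _ => ?_
    rw [hPtot, LinearMap.sum_apply]
    refine hBD_sum _ _ fun e _ => ?_
    exact hBD_sector _ _ (hSupp m e (m + s) σ).symm
  -- key one-detector computation
  have hkey : ∀ (D0 : Fin k → ZMod 2) (σ : Matrix (Fin d) (Fin d) ℂ),
      (∑ a, Pr a * σ * Pr a = σ) →
      ∑ s0, I (D0 + s0) (I s0 σ) = E D0 σ := by
    intro D0 σ hσ
    have h1 : ∀ s0, I (D0 + s0) (I s0 σ)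
        = ∑ m', ∑ m, Ptot m' (P m (D0 + m + m') (Pr (m + s0) * σ * Pr (m + s0))) := by
      intro s0
      rw [hI]
      refine Finset.sum_congr rfl fun m' _ => ?_
      have h2 : Pr (m' + (D0 + s0)) * (I s0 σ) * Pr (m' + (D0 + s0))
          = ∑ m, P m (D0 + m + m') (Pr (m + s0) * σ * Pr (m + s0)) := by
        rw [hI, Finset.mul_sum, Finset.sum_mul]
        refine Finset.sum_congr rfl fun m _ => ?_
        rw [hProp m (m + s0) (m' + (D0 + s0)) σ, hG m s0 m' D0]
      rw [h2, map_sum]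
    calc ∑ s0, I (D0 + s0) (I s0 σ)
        = ∑ s0, ∑ m', ∑ m,
            Ptot m' (P m (D0 + m + m') (Pr (m + s0) * σ * Pr (m + s0))) :=
          Finset.sum_congr rfl fun s0 _ => h1 s0
      _ = ∑ m', ∑ m, ∑ s0,
            Ptot m' (P m (D0 + m + m') (Pr (m + s0) * σ * Pr (m + s0))) := by
          rw [Finset.sum_comm]
          exact Finset.sum_congr rfl fun m' _ => Finset.sum_comm
      _ = ∑ m', ∑ m, Ptot m' (P m (D0 + m + m') σ) := by
          refine Finset.sum_congr rfl fun m' _ => Finset.sum_congr rfl fun m _ => ?_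
          have hre : ∑ s0, Pr (m + s0) * σ * Pr (m + s0) = σ := by
            have h3 := Equiv.sum_comp (Equiv.addLeft m)
              (fun a : Fin k → ZMod 2 => Pr a * σ * Pr a)
            simp only [Equiv.coe_addLeft] at h3
            rw [h3, hσ]
          conv_rhs => rw [← hre]
          rw [map_sum, map_sum]
      _ = E D0 σ := by rw [hE, Finset.sum_comm]
  -- main induction (with block-diagonal hypothesis)
  suffices h : ∀ (r : ℕ) (D : Fin r → (Fin k → ZMod 2)) (σ : Matrix (Fin d) (Fin d) ℂ),
      (∑ a, Pr a * σ * Pr a = σ) →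
      ∑ s : Fin r → (Fin k → ZMod 2),
          ((List.ofFn fun i => I (D i + s i) * I (s i)).reverse).prod σ
        = ((List.ofFn fun i => E (D i)).reverse).prod σ by
    exact h r D ρ (hBD_sector 0 ρ hρ)
  intro r
  induction r with
  | zero =>
    intro D σ hσ
    simp
  | succ n ih =>
    intro D σ hσ
    rw [← Equiv.sum_comp (Fin.consEquiv (fun _ : Fin (n + 1) => Fin k → ZMod 2))
      (fun s : Fin (n + 1) → (Fin k → ZMod 2) =>
        ((List.ofFn fun i => I (D i + s i) * I (s i)).reverse).prod σ)]
    rw [Fintype.sum_prod_type]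
    have hlist : ∀ (s0 : Fin k → ZMod 2) (s' : Fin n → (Fin k → ZMod 2)),
        ((List.ofFn fun i : Fin (n + 1) =>
            I (D i + (Fin.consEquiv (fun _ : Fin (n+1) => Fin k → ZMod 2)) (s0, s') i) *
            I ((Fin.consEquiv (fun _ : Fin (n+1) => Fin k → ZMod 2)) (s0, s') i)).reverse).prod σ
        = ((List.ofFn fun i : Fin n =>
            I (D i.succ + s' i) * I (s' i)).reverse).prod (I (D 0 + s0) (I s0 σ)) := by
      intro s0 s'
      simp only [Fin.consEquiv_apply, List.ofFn_succ, Fin.cons_zero, Fin.cons_succ,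
        List.reverse_cons, List.prod_append, List.prod_cons, List.prod_nil, mul_one,
        Module.End.mul_apply]
    calc ∑ s0, ∑ s' : Fin n → (Fin k → ZMod 2),
          ((List.ofFn fun i : Fin (n + 1) =>
              I (D i + (Fin.consEquiv (fun _ : Fin (n+1) => Fin k → ZMod 2)) (s0, s') i) *
              I ((Fin.consEquiv (fun _ : Fin (n+1) => Fin k → ZMod 2)) (s0, s') i)).reverse).prod σ
        = ∑ s0, ∑ s' : Fin n → (Fin k → ZMod 2),
            ((List.ofFn fun i : Fin n =>
              I (D i.succ + s' i) * I (s' i)).reverse).prod (I (D 0 + s0) (I s0 σ)) :=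
          Finset.sum_congr rfl fun s0 _ => Finset.sum_congr rfl fun s' _ => hlist s0 s'
      _ = ∑ s0,
            ((List.ofFn fun i : Fin n => E (D i.succ)).reverse).prod
              (I (D 0 + s0) (I s0 σ)) :=
          Finset.sum_congr rfl fun s0 _ =>
            ih (fun i => D i.succ) (I (D 0 + s0) (I s0 σ)) (hBD_I _ _)
      _ = ((List.ofFn fun i : Fin n => E (D i.succ)).reverse).prod
            (∑ s0, I (D 0 + s0) (I s0 σ)) :=
          (map_sum _ _ _).symm
      _ = ((List.ofFn fun i : Fin n => E (D i.succ)).reverse).prod (E (D 0) σ) := by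
          rw [hkey (D 0) σ hσ]
      _ = ((List.ofFn fun i : Fin (n + 1) => E (D i)).reverse).prod σ := by
          simp only [List.ofFn_succ, List.reverse_cons, List.prod_append, List.prod_cons,
            List.prod_nil, mul_one, Module.End.mul_apply]
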